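/- Let ε > 0, 0 < g₁ ≤ g₂, 0 < δ̄ ≤ c₁, τ > 0 with g₂·τ ≤ ε/(c₁ + 1)². Let t_k = t₀ + k·τ for k ∈ ℕ, let g, δ : ℝ → ℝ be integrable on every bounded interval with g₁ ≤ g(s) ≤ g₂ and |δ(s)| ≤ δ̄ for all s ≥ t₀. Define recursively u_k = −x_k/(ε − |x_k|) and x_{k+1} = x_k + ∫_{t_k}^{t_{k+1}} g(s)·(δ(s) + u_k) ds. If |x₀| ≤ (c₁/(c₁+1))·ε, then for every k ∈ ℕ, |x_k| ≤ (c₁/(c₁+1))·ε; moreover, if |x_k| ≤ (δ̄/(δ̄+1))·ε for some k, then |x_j| ≤ (δ̄/(δ̄+1))·ε for all j ≥ k. -/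

import Mathlib

open MeasureTheory intervalIntegral

lemma key_ineq (ε δb c I r : ℝ) (hε : 0 < ε) (hδb : 0 ≤ δb) (hδc : δb ≤ c)
    (hr0 : 0 ≤ r) (hrm : r ≤ c / (c + 1) * ε) (hI0 : 0 ≤ I)
    (hI : I ≤ ε / (c + 1) ^ 2) :
    (1 - I / (ε - r)) * r + δb * I ≤ c / (c + 1) * ε := by
  have hc : (0:ℝ) < c + 1 := by linarith
  have hm : c / (c + 1) * ε + ε / (c + 1) = ε := by field_simp
  have hd : 0 < ε - r := by
    have : 0 < ε / (c + 1) := by positivity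
    linarith
  have hI' : I * (c + 1) ^ 2 ≤ ε := by
    rw [div_eq_mul_inv] at hI
    calc I * (c+1)^2 ≤ ε * ((c+1)^2)⁻¹ * (c+1)^2 := by
          apply mul_le_mul_of_nonneg_right hI (by positivity)
      _ = ε := by field_simp
  have key2 : I * (δb * (ε - r) - r) ≤ (c / (c + 1) * ε - r) * (ε - r) := by
    rcases le_or_gt (δb * (ε - r)) r with h | h
    · have h1 : I * (δb * (ε - r) - r) ≤ 0 :=
        mul_nonpos_of_nonneg_of_nonpos hI0 (by linarith)
      have h2 : 0 ≤ (c / (c + 1) * ε - r) * (ε - r) :=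
        mul_nonneg (by linarith) (by linarith)
      linarith
    · set m := c / (c + 1) * ε with hmdef
      have hεd : ε ≤ (c + 1) * (ε - r) := by nlinarith [hm]
      have hmr : 0 ≤ m - r := by linarith
      have hcm : (c + 1) * m * ε = c * ε * ε := by rw [hmdef]; field_simp
      have hint1 : ((c+1)*(m-r)) * ε ≤ ((c+1)*(m-r)) * ((c+1)*(ε-r)) :=
        mul_le_mul_of_nonneg_left hεd (mul_nonneg hc.le hmr)
      have hint2 : 0 ≤ ε * ((c - δb) * (ε - r)) :=
        mul_nonneg hε.le (mul_nonneg (by linarith) hd.le)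
      have h3 : ε * (δb * (ε - r) - r) ≤ (c + 1) ^ 2 * ((m - r) * (ε - r)) := by
        nlinarith [hint1, hint2, hcm]
      have hpos : (0:ℝ) ≤ δb * (ε - r) - r := by linarith
      have h4 : I * (c+1)^2 * (δb * (ε - r) - r) ≤ ε * (δb * (ε - r) - r) :=
        mul_le_mul_of_nonneg_right hI' hpos
      nlinarith [h3, h4, pow_pos hc 2]
  have hexp : (1 - I / (ε - r)) * r + δb * I - c / (c + 1) * ε
      = (I * (δb * (ε - r) - r) - (c / (c + 1) * ε - r) * (ε - r)) / (ε - r) := by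
    field_simp
    ring
  have hnum : (I * (δb * (ε - r) - r) - (c / (c + 1) * ε - r) * (ε - r)) / (ε - r) ≤ 0 :=
    div_nonpos_of_nonpos_of_nonneg (by linarith) (le_of_lt hd)
  linarith [hexp ▸ hnum]

lemma step_aux (ε g₁ g₂ δb c τ t₀ : ℝ)
    (hε : 0 < ε) (hg₁ : 0 < g₁) (hg₁₂ : g₁ ≤ g₂)
    (hδb : 0 < δb) (hδc : δb ≤ c) (hτ : 0 < τ)
    (hsamp : g₂ * τ ≤ ε / (c + 1) ^ 2)
    (g δ : ℝ → ℝ)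
    (hg_int : ∀ a b : ℝ, IntervalIntegrable g volume a b)
    (hδ_int : ∀ a b : ℝ, IntervalIntegrable δ volume a b)
    (hg_bd : ∀ s : ℝ, t₀ ≤ s → g₁ ≤ g s ∧ g s ≤ g₂)
    (hδ_bd : ∀ s : ℝ, t₀ ≤ s → |δ s| ≤ δb)
    (u xk xk1 : ℝ) (k : ℕ)
    (hu : u = -xk / (ε - |xk|))
    (hxs : xk1 = xk + ∫ s in (t₀ + (k : ℝ) * τ)..(t₀ + ((k : ℝ) + 1) * τ), g s * (δ s + u))
    (hxk : |xk| ≤ c / (c + 1) * ε) : |xk1| ≤ c / (c + 1) * ε := by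
  have hc : (0:ℝ) < c + 1 := by linarith
  set a := t₀ + (k : ℝ) * τ with ha
  set b := t₀ + ((k : ℝ) + 1) * τ with hb
  have hab : a ≤ b := by rw [ha, hb]; nlinarith [Nat.cast_nonneg (α := ℝ) k]
  have ht₀a : t₀ ≤ a := by
    rw [ha]; nlinarith [Nat.cast_nonneg (α := ℝ) k]
  have hIcc : ∀ s ∈ Set.Icc a b, t₀ ≤ s := fun s hs => le_trans ht₀a hs.1
  have hgI : IntervalIntegrable g volume a b := hg_int a b
  have hmg : AEStronglyMeasurable g (volume.restrict (Set.uIoc a b)) := by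
    rw [Set.uIoc_of_le hab]; exact hgI.aestronglyMeasurable
  have hmδ : AEStronglyMeasurable δ (volume.restrict (Set.uIoc a b)) := by
    rw [Set.uIoc_of_le hab]; exact (hδ_int a b).aestronglyMeasurable
  -- integrability of g * δ
  have hgδ : IntervalIntegrable (fun s => g s * δ s) volume a b := by
    apply IntervalIntegrable.mono_fun (f := fun _ : ℝ => g₂ * δb)
      (intervalIntegrable_const) (hmg.mul hmδ)
    filter_upwards [ae_restrict_mem measurableSet_uIoc] with s hs
    rw [Set.uIoc_of_le hab] at hs
    have hst : t₀ ≤ s := le_trans ht₀a hs.1.le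
    have h1 : |g s| ≤ g₂ := by
      have := hg_bd s hst
      rw [abs_of_nonneg (by linarith [this.1])]; exact this.2
    have h2 := hδ_bd s hst
    have : ‖g s * δ s‖ ≤ g₂ * δb := by
      rw [Real.norm_eq_abs, abs_mul]
      exact mul_le_mul h1 h2 (abs_nonneg _) (by linarith)
    calc ‖g s * δ s‖ ≤ g₂ * δb := this
      _ ≤ ‖g₂ * δb‖ := le_abs_self _
  set I := ∫ s in a..b, g s with hIdef
  set J := ∫ s in a..b, g s * δ s with hJdef
  -- split the integral
  have hsplit : (∫ s in a..b, g s * (δ s + u)) = J + u * I := by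
    have heq : (fun s => g s * (δ s + u)) = fun s => g s * δ s + g s * u := by
      funext s; ring
    rw [show (∫ s in a..b, g s * (δ s + u)) = ∫ s in a..b, (g s * δ s + g s * u) from by rw [heq]]
    rw [intervalIntegral.integral_add hgδ (hgI.mul_const u),
      intervalIntegral.integral_mul_const]
    ring
  have hgpos : ∀ s ∈ Set.Icc a b, 0 ≤ g s := fun s hs => by
    linarith [(hg_bd s (hIcc s hs)).1]
  have hI0 : 0 ≤ I := intervalIntegral.integral_nonneg hab hgpos
  have hI2 : I ≤ g₂ * τ := by
    have h := intervalIntegral.integral_mono_on hab hgI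
      (_root_.intervalIntegrable_const (c := g₂)) (fun s hs => (hg_bd s (hIcc s hs)).2)
    rw [intervalIntegral.integral_const, smul_eq_mul] at h
    have hba : b - a = τ := by rw [ha, hb]; ring
    rw [hba] at h
    linarith [h]
  have hIle : I ≤ ε / (c + 1) ^ 2 := le_trans hI2 hsamp
  -- bounds on J
  have hJub : J ≤ δb * I := by
    have h := intervalIntegral.integral_mono_on hab hgδ (hgI.const_mul δb)
      (fun s hs => by
        have h2 := hδ_bd s (hIcc s hs)
        have hg0 := hgpos s hs
        have := (abs_le.1 h2).2
        nlinarith)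
    rwa [intervalIntegral.integral_const_mul] at h
  have hJlb : -(δb * I) ≤ J := by
    have h := intervalIntegral.integral_mono_on hab (hgI.const_mul (-δb)) hgδ
      (fun s hs => by
        have h2 := hδ_bd s (hIcc s hs)
        have hg0 := hgpos s hs
        have := (abs_le.1 h2).1
        nlinarith)
    rw [intervalIntegral.integral_const_mul] at h
    linarith
  have hJabs : |J| ≤ δb * I := abs_le.2 ⟨hJlb, hJub⟩
  have hxx : xk1 = xk + (J + u * I) := by rw [hxs, hsplit]
  clear_value I J
  clear hsplit hJdef hIdef hxs
  have hme : c / (c + 1) * ε + ε / (c + 1) = ε := by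
    rw [div_mul_eq_mul_div, ← add_div, div_eq_iff hc.ne']; ring
  have hd : 0 < ε - |xk| := by
    have h1 : 0 < ε / (c + 1) := by positivity
    linarith
  have hx' : xk1 = xk * (1 - I / (ε - |xk|)) + J := by
    rw [hxx, hu]
    field_simp
    ring
  have hlam : 0 ≤ 1 - I / (ε - |xk|) := by
    have h2 : ε / (c + 1) ^ 2 ≤ ε / (c + 1) := by
      apply div_le_div_of_nonneg_left hε.le hc
      nlinarith
    have h3 : ε / (c + 1) ≤ ε - |xk| := by linarith
    have h4 : I / (ε - |xk|) ≤ 1 := by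
      rw [div_le_one hd]; linarith
    linarith
  calc |xk1| = |xk * (1 - I / (ε - |xk|)) + J| := by rw [hx']
    _ ≤ |xk * (1 - I / (ε - |xk|))| + |J| := abs_add_le _ _
    _ = |xk| * (1 - I / (ε - |xk|)) + |J| := by
        rw [abs_mul, abs_of_nonneg hlam]
    _ ≤ (1 - I / (ε - |xk|)) * |xk| + δb * I := by
        linarith [mul_comm (|xk|) (1 - I / (ε - |xk|))]
    _ ≤ c / (c + 1) * ε :=
        key_ineq ε δb c I (|xk|) hε hδb.le hδc (abs_nonneg _) hxk hI0 hIle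

/-- invariance part of Proposition 2: under the sampling restriction
`g₂τ ≤ ε/(c₁+1)²`, the sampled barrier-function closed loop keeps the trajectory in
Div 3 ∪ Div 4 = {x : |x| ≤ (c₁/(c₁+1))ε}; moreover Div 4 = {x : |x| ≤ (δ̄/(δ̄+1))ε}
is positively invariant. -/
theorem stmt_10 (ε g₁ g₂ δb c₁ τ t₀ : ℝ)
    (hε : 0 < ε) (hg₁ : 0 < g₁) (hg₁₂ : g₁ ≤ g₂)
    (hδb : 0 < δb) (hδc : δb ≤ c₁) (hτ : 0 < τ)
    (hsamp : g₂ * τ ≤ ε / (c₁ + 1) ^ 2)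
    (g δ : ℝ → ℝ)
    (hg_int : ∀ a b : ℝ, IntervalIntegrable g volume a b)
    (hδ_int : ∀ a b : ℝ, IntervalIntegrable δ volume a b)
    (hg_bd : ∀ s : ℝ, t₀ ≤ s → g₁ ≤ g s ∧ g s ≤ g₂)
    (hδ_bd : ∀ s : ℝ, t₀ ≤ s → |δ s| ≤ δb)
    (x u : ℕ → ℝ)
    (hu : ∀ k, u k = -(x k) / (ε - |x k|))
    (hx : ∀ k : ℕ, x (k + 1) =
      x k + ∫ s in (t₀ + (k : ℝ) * τ)..(t₀ + ((k : ℝ) + 1) * τ), g s * (δ s + u k))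
    (hx₀ : |x 0| ≤ (c₁ / (c₁ + 1)) * ε) :
    (∀ k : ℕ, |x k| ≤ (c₁ / (c₁ + 1)) * ε) ∧
    (∀ k : ℕ, |x k| ≤ (δb / (δb + 1)) * ε →
      ∀ j : ℕ, k ≤ j → |x j| ≤ (δb / (δb + 1)) * ε) := by
  have step : ∀ c : ℝ, δb ≤ c → c ≤ c₁ → ∀ k : ℕ,
      |x k| ≤ c / (c + 1) * ε → |x (k + 1)| ≤ c / (c + 1) * ε := by
    intro c h1 h2 k hk
    have hsamp' : g₂ * τ ≤ ε / (c + 1) ^ 2 := by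
      refine le_trans hsamp ?_
      apply div_le_div_of_nonneg_left hε.le (by nlinarith)
      nlinarith
    exact step_aux ε g₁ g₂ δb c τ t₀ hε hg₁ hg₁₂ hδb h1 hτ hsamp' g δ hg_int hδ_int
      hg_bd hδ_bd (u k) (x k) (x (k + 1)) k (hu k) (hx k) hk
  constructor
  · intro k
    induction k with
    | zero => exact hx₀
    | succ n ih => exact step c₁ hδc le_rfl n ih
  · intro k hk j hj
    induction j, hj using Nat.le_induction with
    | base => exact hk
    | succ n hn ih => exact step δb le_rfl hδc n ih
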